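/- For 2 < p < ∞, consider in (ℝ², ‖·‖_p) the points B = (-1,0), C = (1,0), and A' = (0,y) where y > 0 is chosen so that ‖A' - B‖_p = ‖A' - C‖_p = √2. Then the p-norm circumradius of (A', B, C) is strictly greater than 1, while a Euclidean comparison triangle for (A', B, C) has sides 2, √2, √2 and circumradius exactly 1. Hence (ℝ², ‖·‖_p) does not satisfy Curv ≤ 0. -/

import Mathlib

open scoped ENNReal

theorem lp_plane_not_curv_nonpos (p : ℝ≥0∞) [Fact (1 ≤ p)] (hp : 2 < p) (hptop : p ≠ ∞)
    (y : ℝ) (hy : 0 < y)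
    (A' B C : PiLp p (fun _ : Fin 2 => ℝ))
    (hA' : A' = (WithLp.equiv p (Fin 2 → ℝ)).symm ![0, y])
    (hB : B = (WithLp.equiv p (Fin 2 → ℝ)).symm ![-1, 0])
    (hC : C = (WithLp.equiv p (Fin 2 → ℝ)).symm ![1, 0])
    (hAB : ‖A' - B‖ = Real.sqrt 2) (hAC : ‖A' - C‖ = Real.sqrt 2) :
    (1 < ⨅ z : PiLp p (fun _ : Fin 2 => ℝ), max (max ‖z - A'‖ ‖z - B‖) ‖z - C‖) ∧
    (∀ b₁ b₂ b₃ : EuclideanSpace ℝ (Fin 2),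
      ‖b₁ - b₂‖ = ‖A' - B‖ → ‖b₁ - b₃‖ = ‖A' - C‖ → ‖b₂ - b₃‖ = ‖B - C‖ →
      (⨅ z : EuclideanSpace ℝ (Fin 2), max (max ‖z - b₁‖ ‖z - b₂‖) ‖z - b₃‖) = 1) ∧
    ¬ (∀ (x₁ x₂ x₃ : PiLp p (fun _ : Fin 2 => ℝ)) (b₁ b₂ b₃ : EuclideanSpace ℝ (Fin 2)),
        ‖b₁ - b₂‖ = dist x₁ x₂ → ‖b₁ - b₃‖ = dist x₁ x₃ → ‖b₂ - b₃‖ = dist x₂ x₃ →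
        (⨅ z : PiLp p (fun _ : Fin 2 => ℝ), max (max (dist z x₁) (dist z x₂)) (dist z x₃)) ≤
          ⨅ z : EuclideanSpace ℝ (Fin 2), max (max ‖z - b₁‖ ‖z - b₂‖) ‖z - b₃‖) := by
  have hq2 : 2 < p.toReal := by
    have h2 : ((2:ℝ≥0∞)).toReal < p.toReal :=
      (ENNReal.toReal_lt_toReal (by norm_num) hptop).mpr hp
    simpa using h2
  set q := p.toReal with hqdef
  have hq0 : (0:ℝ) < q := by linarith
  have hq0' : q ≠ 0 := hq0.ne'
  have key : ∀ f : PiLp p (fun _ : Fin 2 => ℝ),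
      ‖f‖ = (|f 0| ^ q + |f 1| ^ q) ^ (1 / q) := by
    intro f
    rw [PiLp.norm_eq_sum hq0, Fin.sum_univ_two]
    simp [Real.norm_eq_abs]
    rfl
  -- norm A' - B
  have nAB : ‖A' - B‖ = (1 + y ^ q) ^ (1 / q) := by
    have h0 : (A' - B) 0 = 1 := by
      simp [hA', hB, WithLp.equiv_symm_apply, PiLp.toLp_apply]
    have h1 : (A' - B) 1 = y := by
      simp [hA', hB, WithLp.equiv_symm_apply, PiLp.toLp_apply]
    rw [key, h0, h1, abs_one, abs_of_pos hy, Real.one_rpow]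
  have hnn : (0:ℝ) ≤ 1 + y ^ q := by positivity
  have e1 : 1 + y ^ q = Real.sqrt 2 ^ q := by
    rw [← hAB, nAB, one_div, Real.rpow_inv_rpow hnn hq0']
  have e2 : Real.sqrt 2 ^ q = 2 ^ (q / 2) := by
    rw [show Real.sqrt 2 = (2:ℝ) ^ ((1:ℝ)/2) from Real.sqrt_eq_rpow 2,
      ← Real.rpow_mul (by norm_num), show (1:ℝ)/2 * q = q/2 by ring]
  have h2q : (2:ℝ) < 2 ^ (q / 2) := by
    calc (2:ℝ) = 2 ^ (1:ℝ) := (Real.rpow_one 2).symm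
    _ < 2 ^ (q / 2) := by
        rw [Real.rpow_lt_rpow_left_iff (by norm_num : (1:ℝ) < 2)]; linarith
  have hyq1 : 1 < y ^ q := by rw [e2] at e1; linarith
  have hy1 : 1 < y := by
    by_contra hle
    push_neg at hle
    have : y ^ q ≤ 1 := Real.rpow_le_one hy.le hle hq0.le
    linarith
  -- norm B - C
  have nBC : ‖B - C‖ = 2 := by
    have h0 : (B - C) 0 = -2 := by
      simp [hB, hC, WithLp.equiv_symm_apply, PiLp.toLp_apply]
      norm_num
    have h1 : (B - C) 1 = 0 := by
      simp [hB, hC, WithLp.equiv_symm_apply, PiLp.toLp_apply]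
    rw [key, h0, h1, abs_zero, Real.zero_rpow hq0', add_zero,
      show |(-2:ℝ)| = 2 by norm_num, one_div,
      Real.rpow_rpow_inv (by norm_num) hq0']
  -- Part 1
  have part1 : 1 < ⨅ z : PiLp p (fun _ : Fin 2 => ℝ),
      max (max ‖z - A'‖ ‖z - B‖) ‖z - C‖ := by
    set s := (y - 1) / 2 with hs
    have hs0 : 0 < s := by rw [hs]; linarith
    have hc1 : 1 < (y + 1) / 2 := by linarith
    have hc2 : 1 < (1 + s ^ q) ^ (1 / q) := by
      have hsq : 0 < s ^ q := Real.rpow_pos_of_pos hs0 q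
      calc (1:ℝ) = 1 ^ (1/q) := (Real.one_rpow _).symm
      _ < (1 + s ^ q) ^ (1/q) :=
          Real.rpow_lt_rpow (by norm_num) (by linarith) (by positivity)
    have hmin : 1 < min ((y + 1) / 2) ((1 + s ^ q) ^ (1 / q)) := lt_min hc1 hc2
    refine lt_of_lt_of_le hmin (le_ciInf fun z => ?_)
    rcases le_or_gt (|z 1|) s with hb | hb
    · -- use A'
      have hcomp : (z - A') 1 = z 1 - y := by
        simp [hA', WithLp.equiv_symm_apply, PiLp.toLp_apply]
      have h2 : |z 1 - y| ≤ ‖z - A'‖ := by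
        rw [key]
        calc |z 1 - y| = (|z 1 - y| ^ q) ^ (1/q) := by
              rw [one_div, Real.rpow_rpow_inv (abs_nonneg _) hq0']
        _ ≤ (|(z - A') 0| ^ q + |(z - A') 1| ^ q) ^ (1/q) := by
              rw [hcomp]
              have h0 : (0:ℝ) ≤ |(z - A') 0| ^ q := by positivity
              exact Real.rpow_le_rpow (by positivity) (by linarith) (by positivity)
      have hzb : z 1 ≤ |z 1| := le_abs_self _
      have h1 : y - z 1 ≤ |z 1 - y| := by
        rw [abs_sub_comm]; exact le_abs_self _
      have hAle : min ((y + 1) / 2) ((1 + s ^ q) ^ (1 / q)) ≤ ‖z - A'‖ := by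
        calc min ((y + 1) / 2) ((1 + s ^ q) ^ (1 / q)) ≤ (y + 1) / 2 := min_le_left _ _
        _ ≤ |z 1 - y| := by rw [hs] at hb; linarith
        _ ≤ ‖z - A'‖ := h2
      exact hAle.trans (le_trans (le_max_left _ _) (le_max_left _ _))
    · rcases le_or_gt 0 (z 0) with ha | ha
      · -- use B
        have hcomp0 : (z - B) 0 = z 0 + 1 := by
          simp [hB, WithLp.equiv_symm_apply, PiLp.toLp_apply, sub_neg_eq_add]
        have hcomp1 : (z - B) 1 = z 1 := by
          simp [hB, WithLp.equiv_symm_apply, PiLp.toLp_apply]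
        have e0 : (1:ℝ) ≤ |z 0 + 1| := by
          rw [abs_of_nonneg (by linarith)]; linarith
        have f0 : (1:ℝ) ≤ |z 0 + 1| ^ q := by
          calc (1:ℝ) = 1 ^ q := (Real.one_rpow q).symm
          _ ≤ |z 0 + 1| ^ q := Real.rpow_le_rpow (by norm_num) e0 hq0.le
        have f1 : s ^ q ≤ |z 1| ^ q := Real.rpow_le_rpow hs0.le hb.le hq0.le
        have hBle : (1 + s ^ q) ^ (1 / q) ≤ ‖z - B‖ := by
          rw [key, hcomp0, hcomp1]
          exact Real.rpow_le_rpow (by positivity) (by linarith) (by positivity)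
        exact le_trans (min_le_right _ _)
          (hBle.trans (le_trans (le_max_right _ _) (le_max_left _ _)))
      · -- use C
        have hcomp0 : (z - C) 0 = z 0 - 1 := by
          simp [hC, WithLp.equiv_symm_apply, PiLp.toLp_apply]
        have hcomp1 : (z - C) 1 = z 1 := by
          simp [hC, WithLp.equiv_symm_apply, PiLp.toLp_apply]
        have e0 : (1:ℝ) ≤ |z 0 - 1| := by
          rw [abs_of_nonpos (by linarith)]; linarith
        have f0 : (1:ℝ) ≤ |z 0 - 1| ^ q := by
          calc (1:ℝ) = 1 ^ q := (Real.one_rpow q).symm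
          _ ≤ |z 0 - 1| ^ q := Real.rpow_le_rpow (by norm_num) e0 hq0.le
        have f1 : s ^ q ≤ |z 1| ^ q := Real.rpow_le_rpow hs0.le hb.le hq0.le
        have hCle : (1 + s ^ q) ^ (1 / q) ≤ ‖z - C‖ := by
          rw [key, hcomp0, hcomp1]
          exact Real.rpow_le_rpow (by positivity) (by linarith) (by positivity)
        exact le_trans (min_le_right _ _) (hCle.trans (le_max_right _ _))
  -- Part 2
  have part2 : ∀ b₁ b₂ b₃ : EuclideanSpace ℝ (Fin 2),
      ‖b₁ - b₂‖ = ‖A' - B‖ → ‖b₁ - b₃‖ = ‖A' - C‖ → ‖b₂ - b₃‖ = ‖B - C‖ →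
      (⨅ z : EuclideanSpace ℝ (Fin 2), max (max ‖z - b₁‖ ‖z - b₂‖) ‖z - b₃‖) = 1 := by
    intro b₁ b₂ b₃ h12 h13 h23
    rw [hAB] at h12
    rw [hAC] at h13
    rw [nBC] at h23
    have hbdd : BddBelow (Set.range fun z : EuclideanSpace ℝ (Fin 2) =>
        max (max ‖z - b₁‖ ‖z - b₂‖) ‖z - b₃‖) := by
      refine ⟨0, ?_⟩
      rintro x ⟨z, rfl⟩
      positivity
    apply le_antisymm
    · set m : EuclideanSpace ℝ (Fin 2) := (2⁻¹:ℝ) • (b₂ + b₃) with hm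
      have e2' : m - b₂ = (2⁻¹:ℝ) • (b₃ - b₂) := by rw [hm]; module
      have e3' : m - b₃ = (2⁻¹:ℝ) • (b₂ - b₃) := by rw [hm]; module
      have e1' : m - b₁ = -((2⁻¹:ℝ) • ((b₁ - b₂) + (b₁ - b₃))) := by rw [hm]; module
      have n2 : ‖m - b₂‖ = 1 := by
        rw [e2', norm_smul, norm_sub_rev, h23]
        simp
      have n3 : ‖m - b₃‖ = 1 := by
        rw [e3', norm_smul, h23]
        simp
      have nuv : ‖(b₁ - b₂) + (b₁ - b₃)‖ = 2 := by
        have hpar := parallelogram_law_with_norm ℝ (b₁ - b₂) (b₁ - b₃)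
        have hd : (b₁ - b₂) - (b₁ - b₃) = b₃ - b₂ := by abel
        rw [hd, h12, h13, norm_sub_rev, h23,
          Real.sq_sqrt (by norm_num : (0:ℝ) ≤ 2)] at hpar
        have hx : ‖(b₁ - b₂) + (b₁ - b₃)‖ * ‖(b₁ - b₂) + (b₁ - b₃)‖ = 4 := by linarith
        have hsq := Real.sqrt_mul_self (norm_nonneg ((b₁ - b₂) + (b₁ - b₃)))
        rw [hx] at hsq
        rw [← hsq, show (4:ℝ) = 2 ^ 2 by norm_num, Real.sqrt_sq (by norm_num : (0:ℝ) ≤ 2)]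
      have n1 : ‖m - b₁‖ = 1 := by
        rw [e1', norm_neg, norm_smul, nuv]
        simp
      have hval : max (max ‖m - b₁‖ ‖m - b₂‖) ‖m - b₃‖ = 1 := by
        rw [n1, n2, n3]; simp
      calc (⨅ z : EuclideanSpace ℝ (Fin 2), max (max ‖z - b₁‖ ‖z - b₂‖) ‖z - b₃‖)
          ≤ max (max ‖m - b₁‖ ‖m - b₂‖) ‖m - b₃‖ := ciInf_le hbdd m
      _ = 1 := hval
    · refine le_ciInf fun z => ?_
      have ht : (2:ℝ) ≤ ‖z - b₂‖ + ‖z - b₃‖ := by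
        calc (2:ℝ) = ‖b₂ - b₃‖ := h23.symm
        _ ≤ ‖b₂ - z‖ + ‖z - b₃‖ := by
            simpa [dist_eq_norm] using dist_triangle b₂ z b₃
        _ = ‖z - b₂‖ + ‖z - b₃‖ := by rw [norm_sub_rev b₂ z]
      by_contra hlt
      push_neg at hlt
      simp only [max_lt_iff] at hlt
      linarith [hlt.1.2, hlt.2]
  refine ⟨part1, part2, ?_⟩
  intro hcon
  set e₁ : EuclideanSpace ℝ (Fin 2) := (WithLp.equiv 2 (Fin 2 → ℝ)).symm ![0, 1] with he1
  set e₂ : EuclideanSpace ℝ (Fin 2) := (WithLp.equiv 2 (Fin 2 → ℝ)).symm ![-1, 0] with he2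
  set e₃ : EuclideanSpace ℝ (Fin 2) := (WithLp.equiv 2 (Fin 2 → ℝ)).symm ![1, 0] with he3
  have keyE : ∀ f : EuclideanSpace ℝ (Fin 2), ‖f‖ = Real.sqrt (f 0 ^ 2 + f 1 ^ 2) := by
    intro f
    rw [EuclideanSpace.norm_eq, Fin.sum_univ_two]
    simp [Real.norm_eq_abs, sq_abs]
  have n12 : ‖e₁ - e₂‖ = Real.sqrt 2 := by
    have h0 : (e₁ - e₂) 0 = 1 := by
      simp [he1, he2, WithLp.equiv_symm_apply, PiLp.toLp_apply]
    have h1 : (e₁ - e₂) 1 = 1 := by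
      simp [he1, he2, WithLp.equiv_symm_apply, PiLp.toLp_apply]
    rw [keyE, h0, h1]
    norm_num
  have n13 : ‖e₁ - e₃‖ = Real.sqrt 2 := by
    have h0 : (e₁ - e₃) 0 = -1 := by
      simp [he1, he3, WithLp.equiv_symm_apply, PiLp.toLp_apply]
    have h1 : (e₁ - e₃) 1 = 1 := by
      simp [he1, he3, WithLp.equiv_symm_apply, PiLp.toLp_apply]
    rw [keyE, h0, h1]
    norm_num
  have n23 : ‖e₂ - e₃‖ = 2 := by
    have h0 : (e₂ - e₃) 0 = -2 := by
      simp [he2, he3, WithLp.equiv_symm_apply, PiLp.toLp_apply]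
      norm_num
    have h1 : (e₂ - e₃) 1 = 0 := by
      simp [he2, he3, WithLp.equiv_symm_apply, PiLp.toLp_apply]
    rw [keyE, h0, h1]
    rw [show ((-2:ℝ)) ^ 2 + (0:ℝ) ^ 2 = 2 ^ 2 by norm_num, Real.sqrt_sq (by norm_num : (0:ℝ) ≤ 2)]
  have hc := hcon A' B C e₁ e₂ e₃
    (by rw [n12, dist_eq_norm, hAB]) (by rw [n13, dist_eq_norm, hAC])
    (by rw [n23, dist_eq_norm, nBC])
  have h2 := part2 e₁ e₂ e₃ (by rw [n12, hAB]) (by rw [n13, hAC]) (by rw [n23, nBC])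
  rw [h2] at hc
  simp only [dist_eq_norm] at hc
  linarith [part1, hc]
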